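/- Let X be a complex Banach space with dim X ≥ 3 and let A ∈ B(X) be an algebraic operator of degree two (i.e., A² = aA + bI for some a, b ∈ ℂ and A is not a scalar multiple of the identity) whose rank is greater than one (the range of A has dimension at least 2). Then there exists an operator N ∈ B(X) such that either α(NAN) = δ(NAN) and α(NAN) ∉ {1, 2}, or α(ANA) = δ(ANA) and α(ANA) ∉ {1, 2}. -/

import Mathlib

noncomputable def ascent {X : Type*} [NormedAddCommGroup X] [NormedSpace ℂ X]
    (T : X →L[ℂ] X) : ℕ∞ :=
  sInf (Nat.cast '' {m : ℕ | LinearMap.ker ((T ^ m : X →L[ℂ] X) : X →ₗ[ℂ] X) = LinearMap.ker ((T ^ (m + 1) : X →L[ℂ] X) : X →ₗ[ℂ] X)})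

noncomputable def descent {X : Type*} [NormedAddCommGroup X] [NormedSpace ℂ X]
    (T : X →L[ℂ] X) : ℕ∞ :=
  sInf (Nat.cast '' {m : ℕ | LinearMap.range ((T ^ m : X →L[ℂ] X) : X →ₗ[ℂ] X) = LinearMap.range ((T ^ (m + 1) : X →L[ℂ] X) : X →ₗ[ℂ] X)})

section Aux

variable {X : Type*} [NormedAddCommGroup X] [NormedSpace ℂ X]

lemma pow_succ_apply (T : X →L[ℂ] X) (n : ℕ) (v : X) :
    (T ^ (n + 1)) v = T ((T ^ n) v) := by
  rw [pow_succ']; rfl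

lemma pow_succ_apply' (T : X →L[ℂ] X) (n : ℕ) (v : X) :
    (T ^ (n + 1)) v = (T ^ n) (T v) := by
  rw [pow_succ]; rfl

lemma ascent_eq_zero {T : X →L[ℂ] X} (h : LinearMap.ker ((T : X →L[ℂ] X) : X →ₗ[ℂ] X) = ⊥) : ascent T = 0 := by
  have h0 : (0:ℕ) ∈ {m : ℕ | LinearMap.ker ((T ^ m : X →L[ℂ] X) : X →ₗ[ℂ] X) = LinearMap.ker ((T ^ (m + 1) : X →L[ℂ] X) : X →ₗ[ℂ] X)} := by
    show LinearMap.ker ((T ^ 0 : X →L[ℂ] X) : X →ₗ[ℂ] X) = LinearMap.ker ((T ^ 1 : X →L[ℂ] X) : X →ₗ[ℂ] X)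
    rw [pow_zero, pow_one, h]
    exact LinearMap.ker_eq_bot'.mpr fun v hv => hv
  exact le_antisymm (sInf_le ⟨0, h0, Nat.cast_zero⟩) zero_le

lemma descent_eq_zero {T : X →L[ℂ] X} (h : LinearMap.range ((T : X →L[ℂ] X) : X →ₗ[ℂ] X) = ⊤) : descent T = 0 := by
  have h0 : (0:ℕ) ∈ {m : ℕ | LinearMap.range ((T ^ m : X →L[ℂ] X) : X →ₗ[ℂ] X) = LinearMap.range ((T ^ (m + 1) : X →L[ℂ] X) : X →ₗ[ℂ] X)} := by
    show LinearMap.range ((T ^ 0 : X →L[ℂ] X) : X →ₗ[ℂ] X) = LinearMap.range ((T ^ 1 : X →L[ℂ] X) : X →ₗ[ℂ] X)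
    rw [pow_zero, pow_one, h]
    ext v
    simp
  exact le_antisymm (sInf_le ⟨0, h0, Nat.cast_zero⟩) zero_le

lemma ker_stab {T : X →L[ℂ] X} {m : ℕ}
    (h : LinearMap.ker ((T ^ m : X →L[ℂ] X) : X →ₗ[ℂ] X) = LinearMap.ker ((T ^ (m + 1) : X →L[ℂ] X) : X →ₗ[ℂ] X)) (k : ℕ) :
    LinearMap.ker ((T ^ (m + k) : X →L[ℂ] X) : X →ₗ[ℂ] X) = LinearMap.ker ((T ^ m : X →L[ℂ] X) : X →ₗ[ℂ] X) := by
  induction k with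
  | zero => rfl
  | succ k ih =>
    apply le_antisymm
    · intro v hv
      have hv0 : (T ^ (m + k + 1)) v = 0 := hv
      rw [pow_succ_apply'] at hv0
      have h1 : T v ∈ LinearMap.ker ((T ^ m : X →L[ℂ] X) : X →ₗ[ℂ] X) := ih ▸ (LinearMap.mem_ker.mpr hv0)
      have h2 : v ∈ LinearMap.ker ((T ^ (m + 1) : X →L[ℂ] X) : X →ₗ[ℂ] X) :=
        LinearMap.mem_ker.mpr (by show (T ^ (m + 1)) v = 0; rw [pow_succ_apply']; exact h1)
      exact h ▸ h2
    · intro v hv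
      show (T ^ (m + (k + 1))) v = 0
      rw [show m + (k+1) = (k+1) + m from add_comm _ _, pow_add,
        ContinuousLinearMap.mul_apply, show (T ^ m) v = 0 from hv, map_zero]

lemma range_pow_succ (T : X →L[ℂ] X) (n : ℕ) :
    LinearMap.range ((T ^ (n + 1) : X →L[ℂ] X) : X →ₗ[ℂ] X) = Submodule.map (T : X →ₗ[ℂ] X) (LinearMap.range ((T ^ n : X →L[ℂ] X) : X →ₗ[ℂ] X)) := by
  ext w
  constructor
  · rintro ⟨v, rfl⟩
    exact ⟨(T ^ n) v, ⟨v, rfl⟩, (pow_succ_apply T n v).symm⟩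
  · rintro ⟨u, ⟨v, rfl⟩, rfl⟩
    exact ⟨v, pow_succ_apply T n v⟩

lemma range_stab {T : X →L[ℂ] X} {m : ℕ}
    (h : LinearMap.range ((T ^ m : X →L[ℂ] X) : X →ₗ[ℂ] X) = LinearMap.range ((T ^ (m + 1) : X →L[ℂ] X) : X →ₗ[ℂ] X)) (k : ℕ) :
    LinearMap.range ((T ^ (m + k) : X →L[ℂ] X) : X →ₗ[ℂ] X) = LinearMap.range ((T ^ m : X →L[ℂ] X) : X →ₗ[ℂ] X) := by
  induction k with
  | zero => rfl
  | succ k ih =>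
    calc LinearMap.range ((T ^ (m + k + 1) : X →L[ℂ] X) : X →ₗ[ℂ] X)
        = Submodule.map (T : X →ₗ[ℂ] X) (LinearMap.range ((T ^ (m + k) : X →L[ℂ] X) : X →ₗ[ℂ] X)) := range_pow_succ T (m+k)
      _ = Submodule.map (T : X →ₗ[ℂ] X) (LinearMap.range ((T ^ m : X →L[ℂ] X) : X →ₗ[ℂ] X)) := by rw [ih]
      _ = LinearMap.range ((T ^ (m + 1) : X →L[ℂ] X) : X →ₗ[ℂ] X) := (range_pow_succ T m).symm
      _ = LinearMap.range ((T ^ m : X →L[ℂ] X) : X →ₗ[ℂ] X) := h.symm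

lemma ascent_descent_three {T : X →L[ℂ] X} (h3 : T ^ 3 = 0) (h2 : T ^ 2 ≠ 0) :
    ascent T = 3 ∧ descent T = 3 := by
  have hpow : ∀ n : ℕ, 3 ≤ n → T ^ n = 0 := by
    intro n hn
    obtain ⟨k, rfl⟩ := Nat.exists_eq_add_of_le hn
    rw [pow_add, h3, zero_mul]
  have hker_top : ∀ n : ℕ, 3 ≤ n → LinearMap.ker ((T ^ n : X →L[ℂ] X) : X →ₗ[ℂ] X) = ⊤ := by
    intro n hn
    rw [hpow n hn]
    exact LinearMap.ker_eq_top.mpr rfl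
  have hrange_bot : ∀ n : ℕ, 3 ≤ n → LinearMap.range ((T ^ n : X →L[ℂ] X) : X →ₗ[ℂ] X) = ⊥ := by
    intro n hn
    rw [hpow n hn]
    exact LinearMap.range_eq_bot.mpr rfl
  have hTm_ne : ∀ m : ℕ, m ≤ 2 → T ^ m ≠ 0 := by
    intro m hm h0
    apply h2
    have h22 : T ^ 2 = T ^ m * T ^ (2 - m) := by rw [← pow_add]; congr 1; omega
    rw [h22, h0, zero_mul]
  constructor
  · apply le_antisymm
    · apply sInf_le
      exact ⟨3, by simp only [Set.mem_setOf_eq, hker_top 3 le_rfl, hker_top 4 (by norm_num)], rfl⟩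
    · apply le_sInf
      rintro e ⟨m, hm, rfl⟩
      by_contra hlt
      push_neg at hlt
      have hm2 : m ≤ 2 := by exact_mod_cast Nat.lt_succ_iff.mp (by exact_mod_cast hlt)
      have := ker_stab hm (3 - m)
      rw [show m + (3 - m) = 3 from by omega] at this
      rw [hker_top 3 le_rfl] at this
      apply hTm_ne m hm2
      ext v
      have hv : v ∈ LinearMap.ker ((T ^ m : X →L[ℂ] X) : X →ₗ[ℂ] X) := this.symm ▸ Submodule.mem_top
      exact hv
  · apply le_antisymm
    · apply sInf_le
      exact ⟨3, by simp only [Set.mem_setOf_eq, hrange_bot 3 le_rfl, hrange_bot 4 (by norm_num)], rfl⟩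
    · apply le_sInf
      rintro e ⟨m, hm, rfl⟩
      by_contra hlt
      push_neg at hlt
      have hm2 : m ≤ 2 := by exact_mod_cast Nat.lt_succ_iff.mp (by exact_mod_cast hlt)
      have := range_stab hm (3 - m)
      rw [show m + (3 - m) = 3 from by omega, hrange_bot 3 le_rfl] at this
      apply hTm_ne m hm2
      ext v
      have : (T ^ m) v ∈ (⊥ : Submodule ℂ X) := this ▸ ⟨v, rfl⟩
      simpa using this

lemma conclude_three {T : X →L[ℂ] X} (h3 : T ^ 3 = 0) (h2 : T ^ 2 ≠ 0) :
    ascent T = descent T ∧ ascent T ∉ ({1, 2} : Set ℕ∞) := by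
  obtain ⟨ha, hd⟩ := ascent_descent_three h3 h2
  refine ⟨ha.trans hd.symm, ?_⟩
  rw [ha]
  simp only [Set.mem_insert_iff, Set.mem_singleton_iff]
  push_neg
  exact ⟨by decide, by decide⟩

lemma exists_dual_family {n : ℕ} (x : Fin n → X) (hx : LinearIndependent ℂ x) :
    ∃ f : Fin n → (X →L[ℂ] ℂ), ∀ i j, f i (x j) = if i = j then 1 else 0 := by
  set W := Submodule.span ℂ (Set.range x)
  haveI : FiniteDimensional ℂ W := FiniteDimensional.span_of_finite ℂ (Set.finite_range x)
  let b : Module.Basis (Fin n) ℂ W := Module.Basis.span hx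
  have hcont : ∀ i, ∃ g : X →L[ℂ] ℂ, ∀ w : W, g w = b.coord i w := by
    intro i
    obtain ⟨g, hg, -⟩ := exists_extension_norm_eq W (LinearMap.toContinuousLinearMap (b.coord i))
    exact ⟨g, fun w => by simpa using hg w⟩
  choose f hf using hcont
  refine ⟨f, fun i j => ?_⟩
  have hxj : x j ∈ W := Submodule.subset_span ⟨j, rfl⟩
  have := hf i ⟨x j, hxj⟩
  rw [show ((⟨x j, hxj⟩ : W) : X) = x j from rfl] at this
  rw [this, show (⟨x j, hxj⟩ : W) = b j from by exact (Module.Basis.span_apply hx j).symm]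
  simp only [Module.Basis.coord_apply, Module.Basis.repr_self, Finsupp.single_apply]
  simp [eq_comm]

lemma exists_indep_pair_range {A : X →L[ℂ] X}
    (hrank : 2 ≤ Module.rank ℂ (LinearMap.range ((A : X →L[ℂ] X) : X →ₗ[ℂ] X))) :
    ∃ e1 e2 : X, e1 ∈ LinearMap.range ((A : X →L[ℂ] X) : X →ₗ[ℂ] X) ∧ e2 ∈ LinearMap.range ((A : X →L[ℂ] X) : X →ₗ[ℂ] X) ∧
      LinearIndependent ℂ ![e1, e2] := by
  set R := LinearMap.range ((A : X →L[ℂ] X) : X →ₗ[ℂ] X)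
  haveI : Nontrivial R := by
    rw [← rank_pos_iff_nontrivial (R := ℂ)]
    exact lt_of_lt_of_le (by norm_num) hrank
  obtain ⟨x, hx⟩ := exists_ne (0 : R)
  obtain ⟨y, hy⟩ := exists_linearIndependent_pair_of_one_lt_rank
    (lt_of_lt_of_le (by norm_num) hrank) hx
  refine ⟨(x : X), (y : X), x.2, y.2, ?_⟩
  have := hy.map' R.subtype (Submodule.ker_subtype R)
  have heq : R.subtype ∘ ![x, y] = ![(x : X), (y : X)] := by
    ext i
    fin_cases i <;> rfl
  rwa [heq] at this

end Aux

theorem exists_N_triple_ascent_not_one_two {X : Type*} [NormedAddCommGroup X]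
    [NormedSpace ℂ X] [CompleteSpace X] (hdim : 3 ≤ Module.rank ℂ X)
    (A : X →L[ℂ] X) (a b : ℂ) (halg : A ^ 2 = a • A + b • 1)
    (hns : ∀ c : ℂ, A ≠ c • 1)
    (hrank : 2 ≤ Module.rank ℂ (LinearMap.range ((A : X →L[ℂ] X) : X →ₗ[ℂ] X))) :
    ∃ N : X →L[ℂ] X,
      (ascent (N * A * N) = descent (N * A * N) ∧
        ascent (N * A * N) ∉ ({1, 2} : Set ℕ∞)) ∨
      (ascent (A * N * A) = descent (A * N * A) ∧
        ascent (A * N * A) ∉ ({1, 2} : Set ℕ∞)) := by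
  by_cases hb : b = 0
  · -- b = 0 : A^2 = a • A
    rw [hb, zero_smul, add_zero] at halg
    -- A is not injective: obtain z ≠ 0 with A z = 0
    have hAz : ∀ v : X, A ((A - a • 1) v) = 0 := by
      intro v
      have : A * (A - a • 1) = 0 := by
        rw [mul_sub, ← sq, halg, mul_smul_comm, mul_one, sub_self]
      calc A ((A - a • 1) v) = (A * (A - a • 1)) v := rfl
        _ = 0 := by rw [this]; rfl
    have hAne : A - a • 1 ≠ 0 := sub_ne_zero.mpr (hns a)
    obtain ⟨w, hw⟩ : ∃ w, (A - a • 1) w ≠ 0 := by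
      by_contra hcon
      push_neg at hcon
      exact hAne (ContinuousLinearMap.ext fun v => by rw [hcon v]; rfl)
    set z := (A - a • 1) w with hz_def
    have hz0 : A z = 0 := hAz w
    have hzne : z ≠ 0 := hw
    by_cases ha : a = 0
    · -- a = b = 0 : A ^ 2 = 0
      rw [ha, zero_smul] at halg
      have hA2 : ∀ v, A (A v) = 0 := by
        intro v
        calc A (A v) = (A ^ 2) v := by rw [sq]; rfl
          _ = 0 := by rw [halg]; rfl
      obtain ⟨u1, u2, hu1, hu2, hu⟩ := exists_indep_pair_range hrank
      obtain ⟨v1, hv1 : A v1 = u1⟩ := hu1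
      obtain ⟨v2, hv2 : A v2 = u2⟩ := hu2
      have hu1 : u1 ∈ LinearMap.range ((A : X →L[ℂ] X) : X →ₗ[ℂ] X) := ⟨v1, hv1⟩
      have hu2 : u2 ∈ LinearMap.range ((A : X →L[ℂ] X) : X →ₗ[ℂ] X) := ⟨v2, hv2⟩
      have hu1ne : u1 ≠ 0 := hu.ne_zero 0
      -- independence of ![v1, u1, u2]
      have hAu : ∀ w₀ ∈ LinearMap.range ((A : X →L[ℂ] X) : X →ₗ[ℂ] X), A w₀ = 0 := by
        rintro _ ⟨t, rfl⟩; exact hA2 t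
      have hindep : LinearIndependent ℂ ![v1, u1, u2] := by
        rw [show (![v1, u1, u2]) = Fin.cons v1 ![u1, u2] from rfl, linearIndependent_fin_cons]
        refine ⟨hu, fun hmem => ?_⟩
        have hsub : Submodule.span ℂ (Set.range ![u1, u2]) ≤ LinearMap.range ((A : X →L[ℂ] X) : X →ₗ[ℂ] X) := by
          rw [Submodule.span_le]
          rintro _ ⟨i, rfl⟩
          fin_cases i
          · exact hu1
          · exact hu2
        have : A v1 = 0 := hAu v1 (hsub hmem)
        rw [hv1] at this
        exact hu1ne this
      obtain ⟨f, hf⟩ := exists_dual_family _ hindep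
      set N : X →L[ℂ] X :=
        (f 0).smulRight v2 + (f 1).smulRight v1 + (f 2).smulRight u2 with hN_def
      have hNapp : ∀ v, N v = f 0 v • v2 + f 1 v • v1 + f 2 v • u2 := fun v => rfl
      have hf_u2_0 : f 0 u2 = 0 := by simpa using hf 0 2
      have hf_u2_1 : f 1 u2 = 0 := by simpa using hf 1 2
      have hf_u2_2 : f 2 u2 = 1 := by simpa using hf 2 2
      have hf_u1_0 : f 0 u1 = 0 := by simpa using hf 0 1
      have hf_u1_1 : f 1 u1 = 1 := by simpa using hf 1 1
      have hf_u1_2 : f 2 u1 = 0 := by simpa using hf 2 1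
      have hf_v1_0 : f 0 v1 = 1 := by simpa using hf 0 0
      have hf_v1_1 : f 1 v1 = 0 := by simpa using hf 1 0
      have hf_v1_2 : f 2 v1 = 0 := by simpa using hf 2 0
      have hT : ∀ v, (N * A * N) v = f 0 v • u2 + f 1 v • v1 := by
        intro v
        have hstart : (N * A * N) v = N (A (N v)) := rfl
        rw [hstart, hNapp v]
        simp only [map_add, map_smul, hv1, hv2, hAu u2 hu2, smul_zero, add_zero,
          hNapp u2, hNapp u1, hf_u2_0, hf_u2_1, hf_u2_2, hf_u1_0, hf_u1_1, hf_u1_2]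
        module
      have hT2 : ∀ v, (N * A * N) ((N * A * N) v) = f 1 v • u2 := by
        intro v
        rw [hT v, map_add, map_smul, map_smul, hT u2, hT v1]
        rw [hf_u2_0, hf_u2_1, hf_v1_0, hf_v1_1]
        simp
      have h3 : (N * A * N) ^ 3 = 0 := by
        ext v
        have : ((N * A * N) ^ 3) v = (N*A*N) ((N*A*N) ((N*A*N) v)) := by
          rw [show (3:ℕ) = 2 + 1 from rfl, pow_succ_apply,
            show (2:ℕ) = 1 + 1 from rfl, pow_succ_apply, pow_one]
        rw [this, hT2 v, map_smul, hT u2, hf_u2_0, hf_u2_1]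
        simp
      have h2 : (N * A * N) ^ 2 ≠ 0 := by
        intro hcon
        have : ((N * A * N) ^ 2) u1 = 0 := by rw [hcon]; rfl
        rw [show (2:ℕ) = 1 + 1 from rfl, pow_succ_apply, pow_one, hT2 u1] at this
        have hf_u1_1 : f 1 u1 = 1 := by simpa using hf 1 1
        rw [hf_u1_1, one_smul] at this
        exact (hu.ne_zero 1) this
      exact ⟨N, Or.inl (conclude_three h3 h2)⟩
    · -- b = 0, a ≠ 0
      have hAe : ∀ w₀ ∈ LinearMap.range ((A : X →L[ℂ] X) : X →ₗ[ℂ] X), A w₀ = a • w₀ := by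
        rintro _ ⟨t, rfl⟩
        calc A (A t) = (A ^ 2) t := by rw [sq]; rfl
          _ = a • A t := by rw [halg]; rfl
      obtain ⟨e1, e2, he1, he2, he⟩ := exists_indep_pair_range hrank
      have he1ne : e1 ≠ 0 := he.ne_zero 0
      have hindep : LinearIndependent ℂ ![z, e1, e2] := by
        rw [show (![z, e1, e2]) = Fin.cons z ![e1, e2] from rfl, linearIndependent_fin_cons]
        refine ⟨he, fun hmem => ?_⟩
        have hsub : Submodule.span ℂ (Set.range ![e1, e2]) ≤ LinearMap.range ((A : X →L[ℂ] X) : X →ₗ[ℂ] X) := by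
          rw [Submodule.span_le]
          rintro _ ⟨i, rfl⟩
          fin_cases i
          · exact he1
          · exact he2
        have : A z = a • z := hAe z (hsub hmem)
        rw [hz0] at this
        exact hzne ((smul_eq_zero.mp this.symm).resolve_left ha)
      obtain ⟨f, hf⟩ := exists_dual_family _ hindep
      -- N z = e2, N e1 = z, N e2 = e1
      set N : X →L[ℂ] X :=
        (f 0).smulRight e2 + (f 1).smulRight z + (f 2).smulRight e1 with hN_def
      have hNapp : ∀ v, N v = f 0 v • e2 + f 1 v • z + f 2 v • e1 := fun v => rfl
      have hf_z_0 : f 0 z = 1 := by simpa using hf 0 0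
      have hf_z_1 : f 1 z = 0 := by simpa using hf 1 0
      have hf_z_2 : f 2 z = 0 := by simpa using hf 2 0
      have hf_e1_0 : f 0 e1 = 0 := by simpa using hf 0 1
      have hf_e1_1 : f 1 e1 = 1 := by simpa using hf 1 1
      have hf_e1_2 : f 2 e1 = 0 := by simpa using hf 2 1
      have hf_e2_0 : f 0 e2 = 0 := by simpa using hf 0 2
      have hf_e2_1 : f 1 e2 = 0 := by simpa using hf 1 2
      have hf_e2_2 : f 2 e2 = 1 := by simpa using hf 2 2
      have hT : ∀ v, (N * A * N) v = (a * f 2 v) • z + (a * f 0 v) • e1 := by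
        intro v
        have hstart : (N * A * N) v = N (A (N v)) := rfl
        rw [hstart, hNapp v]
        simp only [map_add, map_smul, hz0, smul_zero, add_zero, hAe e2 he2, hAe e1 he1,
          hNapp e2, hNapp e1, hf_e2_0, hf_e2_1, hf_e2_2, hf_e1_0, hf_e1_1, hf_e1_2]
        module
      have hT2 : ∀ v, (N * A * N) ((N * A * N) v) = (a * a * f 2 v) • e1 := by
        intro v
        rw [hT v, map_add, map_smul, map_smul, hT z, hT e1]
        simp only [hf_z_0, hf_z_2, hf_e1_0, hf_e1_2]
        module
      have h3 : (N * A * N) ^ 3 = 0 := by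
        ext v
        have : ((N * A * N) ^ 3) v = (N*A*N) ((N*A*N) ((N*A*N) v)) := by
          rw [show (3:ℕ) = 2 + 1 from rfl, pow_succ_apply,
            show (2:ℕ) = 1 + 1 from rfl, pow_succ_apply, pow_one]
        rw [this, hT2 v, map_smul, hT e1, hf_e1_0, hf_e1_2]
        simp
      have h2 : (N * A * N) ^ 2 ≠ 0 := by
        intro hcon
        have : ((N * A * N) ^ 2) e2 = 0 := by rw [hcon]; rfl
        rw [show (2:ℕ) = 1 + 1 from rfl, pow_succ_apply, pow_one, hT2 e2] at this
        have hf_e2_2 : f 2 e2 = 1 := by simpa using hf 2 2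
        rw [hf_e2_2, mul_one, smul_eq_zero] at this
        rcases this with h | h
        · exact ha (by simpa [mul_self_eq_zero] using h)
        · exact he1ne h
      exact ⟨N, Or.inl (conclude_three h3 h2)⟩
  · -- b ≠ 0 : A invertible, N := b⁻¹ • (A - a • 1)
    set N : X →L[ℂ] X := b⁻¹ • (A - a • 1) with hN_def
    have hAN : A * N = 1 := by
      rw [hN_def, mul_smul_comm, mul_sub, ← sq, halg, mul_smul_comm, mul_one]
      rw [show a • A + b • 1 - a • A = b • (1 : X →L[ℂ] X) from by abel]
      rw [smul_smul, inv_mul_cancel₀ hb, one_smul]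
    have hNA : N * A = 1 := by
      rw [hN_def, smul_mul_assoc, sub_mul, ← sq, halg, smul_mul_assoc, one_mul]
      rw [show a • A + b • 1 - a • A = b • (1 : X →L[ℂ] X) from by abel]
      rw [smul_smul, inv_mul_cancel₀ hb, one_smul]
    have hT : N * A * N = N := by rw [hNA, one_mul]
    have hker : LinearMap.ker ((N : X →L[ℂ] X) : X →ₗ[ℂ] X) = ⊥ := by
      apply LinearMap.ker_eq_bot'.mpr
      intro v hv
      have : (A * N) v = A (N v) := rfl
      calc v = (A * N) v := by rw [hAN]; rfl
        _ = A (N v) := rfl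
        _ = A 0 := by rw [show N v = 0 from hv]
        _ = 0 := map_zero A
    have hrange : LinearMap.range ((N : X →L[ℂ] X) : X →ₗ[ℂ] X) = ⊤ := by
      apply LinearMap.range_eq_top.mpr
      intro v
      exact ⟨A v, by calc N (A v) = (N * A) v := rfl
        _ = v := by rw [hNA]; rfl⟩
    refine ⟨N, Or.inl ⟨?_, ?_⟩⟩
    · rw [hT, ascent_eq_zero hker, descent_eq_zero hrange]
    · rw [hT, ascent_eq_zero hker]
      simp only [Set.mem_insert_iff, Set.mem_singleton_iff]
      push_neg
      exact ⟨by decide, by decide⟩
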